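/- Let A be a positive semidefinite real symmetric d×d matrix, B a d×e real matrix, and C an e×e real symmetric matrix. The block matrix M = [[A, B],[Bᵀ, C]] is positive semidefinite if and only if there exists a d×e matrix W with B = AW and C ⪰ WᵀAW. -/

import Mathlib

open Matrix

private lemma dp_swap {d e : ℕ} (B : Matrix (Fin d) (Fin e) ℝ) (x : Fin d → ℝ) (y : Fin e → ℝ) :
    y ⬝ᵥ Bᵀ *ᵥ x = x ⬝ᵥ B *ᵥ y := by
  rw [dotProduct_mulVec, vecMul_transpose, dotProduct_comm]

private lemma block_quad {d e : ℕ} (A : Matrix (Fin d) (Fin d) ℝ) (B : Matrix (Fin d) (Fin e) ℝ)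
    (C : Matrix (Fin e) (Fin e) ℝ) (x : Fin d → ℝ) (y : Fin e → ℝ) :
    Sum.elim x y ⬝ᵥ (fromBlocks A B Bᵀ C) *ᵥ Sum.elim x y
      = x ⬝ᵥ A *ᵥ x + x ⬝ᵥ B *ᵥ y + y ⬝ᵥ Bᵀ *ᵥ x + y ⬝ᵥ C *ᵥ y := by
  rw [fromBlocks_mulVec, sumElim_dotProduct_sumElim, dotProduct_add, dotProduct_add]
  simp only [Sum.elim_comp_inl, Sum.elim_comp_inr]
  ring

private lemma ker_A_ker_Bt {d e : ℕ} {A : Matrix (Fin d) (Fin d) ℝ} {B : Matrix (Fin d) (Fin e) ℝ}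
    {C : Matrix (Fin e) (Fin e) ℝ}
    (hM : (Matrix.fromBlocks A B Bᵀ C).PosSemidef) {x : Fin d → ℝ} (hx : A *ᵥ x = 0) :
    Bᵀ *ᵥ x = 0 := by
  have key : ∀ y : Fin e → ℝ, x ⬝ᵥ B *ᵥ y = 0 := by
    intro y
    set c := x ⬝ᵥ B *ᵥ y with hc
    set q := y ⬝ᵥ C *ᵥ y with hq
    have ht : ∀ t : ℝ, 0 ≤ 2 * t * c + t ^ 2 * q := by
      intro t
      have h0 := hM.dotProduct_mulVec_nonneg (Sum.elim x (t • y))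
      rw [star_trivial, block_quad] at h0
      have e1 : x ⬝ᵥ B *ᵥ (t • y) = t * c := by
        rw [mulVec_smul, dotProduct_smul, smul_eq_mul, hc]
      have e2 : (t • y) ⬝ᵥ Bᵀ *ᵥ x = t * c := by
        rw [smul_dotProduct, smul_eq_mul, dp_swap, hc]
      have e3 : (t • y) ⬝ᵥ C *ᵥ (t • y) = t ^ 2 * q := by
        rw [mulVec_smul, dotProduct_smul, smul_dotProduct, smul_eq_mul, smul_eq_mul, hq]; ring
      rw [hx, dotProduct_zero, e1, e2, e3] at h0
      linarith
    have hcsq : c ^ 2 ≤ 0 := by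
      rcases le_or_gt q 0 with h | h
      · nlinarith [ht (-c)]
      · have h1 := ht (-c / q)
        have h2 : 2 * (-c / q) * c + (-c / q) ^ 2 * q = -(c ^ 2) / q := by
          field_simp; ring
        rw [h2] at h1
        have h3 : (0:ℝ) ≤ -(c ^ 2) := by
          calc (0:ℝ) ≤ -(c ^ 2) / q * q := mul_nonneg h1 h.le
            _ = -(c ^ 2) := div_mul_cancel₀ _ h.ne'
        linarith
    have : c ^ 2 = 0 := le_antisymm hcsq (sq_nonneg c)
    exact pow_eq_zero_iff two_ne_zero |>.mp this
  ext j
  have := key (Pi.single j 1)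
  simp only [mulVec_single, mul_one] at this
  simpa [mulVec, dotProduct, transpose_apply, mul_comm] using this

private theorem smuljan_fwd (d e : ℕ) (A : Matrix (Fin d) (Fin d) ℝ)
    (B : Matrix (Fin d) (Fin e) ℝ) (C : Matrix (Fin e) (Fin e) ℝ)
    (hA : A.PosSemidef) (hC : C.IsSymm)
    (hM : (Matrix.fromBlocks A B Bᵀ C).PosSemidef)
    (kerlem : ∀ x : Fin d → ℝ, A *ᵥ x = 0 → Bᵀ *ᵥ x = 0) :
      ∃ W : Matrix (Fin d) (Fin e) ℝ, B = A * W ∧ (C - Wᵀ * A * W).PosSemidef := by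
  classical
  have hH := hA.1
  set U : Matrix (Fin d) (Fin d) ℝ := (hH.eigenvectorUnitary : Matrix (Fin d) (Fin d) ℝ) with hU
  have hUU : U * star U = 1 := Unitary.coe_mul_star_self hH.eigenvectorUnitary
  have hsUU : star U * U = 1 := Unitary.coe_star_mul_self hH.eigenvectorUnitary
  set l : Fin d → ℝ := hH.eigenvalues with hl
  have hspec : A = U * diagonal l * star U := by
    have := hH.spectral_theorem
    simpa using this
  have mulUDU : ∀ f g : Fin d → ℝ,
      (U * diagonal f * star U) * (U * diagonal g * star U)
        = U * diagonal (fun i => f i * g i) * star U := by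
    intro f g
    calc (U * diagonal f * star U) * (U * diagonal g * star U)
        = U * diagonal f * (star U * U) * diagonal g * star U := by
          simp only [Matrix.mul_assoc]
      _ = U * diagonal (fun i => f i * g i) * star U := by
          rw [hsUU, Matrix.mul_one, Matrix.mul_assoc U, diagonal_mul_diagonal]
  set μ : Fin d → ℝ := fun i => if l i = 0 then 0 else (l i)⁻¹ with hμ
  set N : Matrix (Fin d) (Fin d) ℝ := U * diagonal (fun i => 1 - l i * μ i) * star U with hN
  have key : U * diagonal (fun i => l i * μ i) * star U = 1 - N := by
    rw [hN, eq_sub_iff_add_eq, ← Matrix.add_mul, ← Matrix.mul_add]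
    have h1 : (diagonal (fun i => l i * μ i) + diagonal fun i => 1 - l i * μ i)
        = (1 : Matrix (Fin d) (Fin d) ℝ) := by
      rw [diagonal_add, ← diagonal_one]
      congr 1
      funext i; ring
    rw [h1, Matrix.mul_one, hUU]
  have hAN : A * N = 0 := by
    rw [hspec, hN, mulUDU]
    have h2 : (fun i => l i * (1 - l i * μ i)) = fun _ => (0:ℝ) := by
      funext i
      by_cases h : l i = 0 <;> simp [hμ, h]
    rw [h2, diagonal_zero, Matrix.mul_zero, Matrix.zero_mul]
  have hBtN : Bᵀ * N = 0 := by
    ext i j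
    have hcol : A *ᵥ (fun k => N k j) = 0 := by
      funext i'
      have := congrFun (congrFun hAN i') j
      simpa [Matrix.mul_apply, mulVec, dotProduct] using this
    have := congrFun (kerlem _ hcol) i
    simpa [Matrix.mul_apply, mulVec, dotProduct] using this
  have hNs : Nᵀ = N := by
    rw [hN]
    simp [star_eq_conjTranspose, conjTranspose_eq_transpose_of_trivial, transpose_mul,
      Matrix.mul_assoc]
  have hNB : N * B = 0 := by
    have := congrArg Matrix.transpose hBtN
    rwa [transpose_mul, transpose_transpose, hNs, transpose_zero] at this
  have hAW : A * ((U * diagonal μ * star U) * B) = B := by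
    rw [← Matrix.mul_assoc, hspec, mulUDU, key, Matrix.sub_mul, Matrix.one_mul, hNB, sub_zero]
  set W : Matrix (Fin d) (Fin e) ℝ := (U * diagonal μ * star U) * B with hW
  refine ⟨W, hAW.symm, PosSemidef.of_dotProduct_mulVec_nonneg ?_ ?_⟩
  · -- IsHermitian (C - Wᵀ * A * W)
    have hCH : C.IsHermitian := by
      rw [Matrix.IsHermitian, conjTranspose_eq_transpose_of_trivial, hC.eq]
    have hWAW : (Wᵀ * A * W).IsHermitian := by
      have := isHermitian_conjTranspose_mul_mul W hH
      rwa [conjTranspose_eq_transpose_of_trivial] at this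
    exact hCH.sub hWAW
  · -- nonneg quadratic form
    intro y
    have h0 := hM.dotProduct_mulVec_nonneg (Sum.elim (-(W *ᵥ y)) y)
    rw [star_trivial, block_quad] at h0
    have hB : B = A * W := hAW.symm
    set q : ℝ := (W *ᵥ y) ⬝ᵥ A *ᵥ (W *ᵥ y) with hq
    have e1 : -(W *ᵥ y) ⬝ᵥ A *ᵥ -(W *ᵥ y) = q := by
      rw [mulVec_neg, neg_dotProduct, dotProduct_neg, neg_neg]
    have hz : (A * W) *ᵥ y = A *ᵥ (W *ᵥ y) := (mulVec_mulVec y A W).symm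
    have e2 : -(W *ᵥ y) ⬝ᵥ B *ᵥ y = -q := by
      rw [neg_dotProduct, hq]
      congr 1
      rw [hB, hz]
    have e3 : y ⬝ᵥ Bᵀ *ᵥ -(W *ᵥ y) = -q := by
      rw [dp_swap, e2]
    rw [e1, e2, e3] at h0
    have e5 : y ⬝ᵥ (Wᵀ * A * W) *ᵥ y = q := by
      rw [Matrix.mul_assoc, ← mulVec_mulVec y Wᵀ (A * W), dp_swap, dotProduct_comm, hz]
    have e4 : y ⬝ᵥ (C - Wᵀ * A * W) *ᵥ y = y ⬝ᵥ C *ᵥ y - q := by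
      rw [sub_mulVec, dotProduct_sub, e5]
    rw [star_trivial, e4]
    linarith

private theorem smuljan_bwd (d e : ℕ) (A : Matrix (Fin d) (Fin d) ℝ)
    (W : Matrix (Fin d) (Fin e) ℝ) (C : Matrix (Fin e) (Fin e) ℝ)
    (hA : A.PosSemidef) (hC : C.IsSymm) (hE : (C - Wᵀ * A * W).PosSemidef) :
    (Matrix.fromBlocks A (A * W) (A * W)ᵀ C).PosSemidef := by
  have hAT : Aᵀ = A := by
    rw [← conjTranspose_eq_transpose_of_trivial, hA.1.eq]
  have hBt : (A * W)ᵀ = Wᵀ * A := by rw [transpose_mul, hAT]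
  set E : Matrix (Fin e) (Fin e) ℝ := C - Wᵀ * A * W with hEdef
  have hD : (fromBlocks A 0 (0 : Matrix (Fin e) (Fin d) ℝ) E).PosSemidef := by
    refine PosSemidef.of_dotProduct_mulVec_nonneg ?_ ?_
    · show _ᴴ = _
      rw [fromBlocks_conjTranspose, conjTranspose_zero, conjTranspose_zero, hA.1.eq, hE.1.eq]
    · intro z
      have hzsplit : z = Sum.elim (z ∘ Sum.inl) (z ∘ Sum.inr) := (Sum.elim_comp_inl_inr z).symm
      have h0 : (fromBlocks A 0 (0 : Matrix (Fin e) (Fin d) ℝ) E)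
          = fromBlocks A 0 (0 : Matrix (Fin d) (Fin e) ℝ)ᵀ E := by rw [transpose_zero]
      rw [star_trivial, hzsplit, h0, block_quad]
      simp only [zero_mulVec, dotProduct_zero, transpose_zero, add_zero, zero_add]
      have h1 := hA.dotProduct_mulVec_nonneg (z ∘ Sum.inl)
      have h2 := hE.dotProduct_mulVec_nonneg (z ∘ Sum.inr)
      rw [star_trivial] at h1 h2
      positivity
  have hX : (fromBlocks (1 : Matrix (Fin d) (Fin d) ℝ) W 0 1)ᴴ
      * fromBlocks A 0 (0 : Matrix (Fin e) (Fin d) ℝ) E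
      * fromBlocks (1 : Matrix (Fin d) (Fin d) ℝ) W 0 1
      = fromBlocks A (A * W) (Wᵀ * A) C := by
    rw [fromBlocks_conjTranspose, fromBlocks_multiply, fromBlocks_multiply]
    simp only [conjTranspose_one, conjTranspose_zero, conjTranspose_eq_transpose_of_trivial,
      Matrix.one_mul, Matrix.mul_one, Matrix.mul_zero, Matrix.zero_mul, add_zero, zero_add,
      Matrix.mul_assoc, transpose_one, transpose_zero]
    congr 1
    rw [hEdef, ← Matrix.mul_assoc, add_sub_cancel]
  rw [hBt, ← hX]
  exact hD.conjTranspose_mul_mul_same _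

/-- Smul'jan's block matrix theorem: for A positive semidefinite and C symmetric,
the block matrix [[A, B],[Bᵀ, C]] is positive semidefinite iff B = AW for some W
and C − WᵀAW is positive semidefinite. -/
theorem smuljan_block_psd (d e : ℕ) (A : Matrix (Fin d) (Fin d) ℝ)
    (B : Matrix (Fin d) (Fin e) ℝ) (C : Matrix (Fin e) (Fin e) ℝ)
    (hA : A.PosSemidef) (hC : C.IsSymm) :
    (Matrix.fromBlocks A B Bᵀ C).PosSemidef ↔
      ∃ W : Matrix (Fin d) (Fin e) ℝ, B = A * W ∧ (C - Wᵀ * A * W).PosSemidef := by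
  constructor
  · intro hM
    exact smuljan_fwd d e A B C hA hC hM (fun x hx => ker_A_ker_Bt hM hx)
  · rintro ⟨W, hB, hE⟩
    rw [hB]
    exact smuljan_bwd d e A W C hA hC hE
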